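/- Let Ω ⊂ ℝ^N be a bounded open set contained in the ball B_{R₀}, u ∈ L¹(Ω) with u ≥ 0, and extend u to Ω^c by u(x) = (∫_Ω u(y)|x−y|^{−(N+2s)} dy)/(∫_Ω |x−y|^{−(N+2s)} dy). Then there exists C > 0 depending only on N, s, R₀ such that for all x ∈ Ω^c with |x| ≥ 2R₀: |u(x) − (1/|Ω|)∫_Ω u| ≤ (C/|x|) · (1/|Ω|)∫_Ω u. That is, the convergence of u(x) to its average over Ω as |x| → ∞ happens at rate 1/|x|. -/

import Mathlib

open MeasureTheory Metric

lemma pow_sub_one_le_aux (n : ℕ) (r : ℝ) (h1 : 1 ≤ r) (h3 : r ≤ 3) :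
    r ^ n - 1 ≤ n * 3 ^ n * (r - 1) := by
  induction n with
  | zero => simp
  | succ n ih =>
    have h0 : (0:ℝ) ≤ r - 1 := by linarith
    have hrn : (1:ℝ) ≤ r ^ n := by simpa using pow_le_pow_left₀ zero_le_one h1 n
    have h3n : (1:ℝ) ≤ 3 ^ n := by simpa using pow_le_pow_left₀ zero_le_one (by norm_num : (1:ℝ) ≤ 3) n
    have key : r * (r ^ n - 1) ≤ 3 * (n * 3 ^ n * (r - 1)) := by
      calc r * (r ^ n - 1) ≤ 3 * (r ^ n - 1) := by nlinarith
        _ ≤ 3 * (n * 3 ^ n * (r - 1)) := by nlinarith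
    have hone : (r - 1) ≤ 3 * 3 ^ n * (r - 1) :=
      le_mul_of_one_le_left h0 (by nlinarith)
    have heq : r ^ (n+1) - 1 = r * (r ^ n - 1) + (r - 1) := by ring
    have hexp : ((n:ℝ)+1) * 3 ^ (n+1) * (r - 1)
        = 3 * ((n:ℝ) * 3 ^ n * (r - 1)) + 3 * 3 ^ n * (r - 1) := by ring
    push_cast
    rw [heq, hexp]
    linarith

set_option maxHeartbeats 1600000 in
theorem stmt11 (N : ℕ) (hN : 0 < N) (s R₀ : ℝ) (hs0 : 0 < s) (hs1 : s < 1)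
    (hR₀ : 0 < R₀) :
    ∃ C > 0, ∀ Ω : Set (EuclideanSpace ℝ (Fin N)), IsOpen Ω → Ω.Nonempty →
      Ω ⊆ ball (0 : EuclideanSpace ℝ (Fin N)) R₀ →
      ∀ u : EuclideanSpace ℝ (Fin N) → ℝ, IntegrableOn u Ω volume →
        (∀ y, 0 ≤ u y) →
        (∀ x ∈ Ωᶜ, u x =
          (∫ y in Ω, u y * ‖x - y‖ ^ (-((N : ℝ) + 2 * s))) /
            ∫ y in Ω, ‖x - y‖ ^ (-((N : ℝ) + 2 * s))) →
        ∀ x ∈ Ωᶜ, 2 * R₀ ≤ ‖x‖ →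
          |u x - (volume Ω).toReal⁻¹ * ∫ y in Ω, u y| ≤
            (C / ‖x‖) * ((volume Ω).toReal⁻¹ * ∫ y in Ω, u y) := by
  refine ⟨((N:ℝ)+2) * 3^(N+2) * 4 * R₀, by positivity, ?_⟩
  intro Ω hΩopen hΩne hΩsub u hu hu0 hext x hx hxnorm
  set p : ℝ := (N:ℝ) + 2*s with hp
  have hp0 : 0 < p := by positivity
  set t := ‖x‖ with ht
  have ht0 : 0 < t := by linarith
  have htR : R₀ < t := by linarith
  have htmR : 0 < t - R₀ := by linarith
  set m : ℝ := (t + R₀) ^ (-p) with hmdef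
  set M : ℝ := (t - R₀) ^ (-p) with hMdef
  have hm0 : 0 < m := Real.rpow_pos_of_pos (by linarith) _
  have hM0 : 0 < M := Real.rpow_pos_of_pos htmR _
  have hker : ∀ y ∈ Ω, m ≤ ‖x - y‖ ^ (-p) ∧ ‖x - y‖ ^ (-p) ≤ M := by
    intro y hy
    have hy' := hΩsub hy
    rw [mem_ball, dist_zero_right] at hy'
    have h1 := norm_sub_norm_le x y
    have h2 := norm_sub_le x y
    have hlb : t - R₀ ≤ ‖x - y‖ := by linarith
    have hub : ‖x - y‖ ≤ t + R₀ := by linarith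
    exact ⟨Real.rpow_le_rpow_of_nonpos (by linarith) hub (by linarith),
      Real.rpow_le_rpow_of_nonpos htmR hlb (by linarith)⟩
  -- measure facts
  have hΩmeas : MeasurableSet Ω := hΩopen.measurableSet
  have hΩfin : volume Ω < ⊤ :=
    lt_of_le_of_lt (measure_mono hΩsub) measure_ball_lt_top
  have hΩpos : 0 < volume Ω := hΩopen.measure_pos volume hΩne
  set V : ℝ := (volume Ω).toReal with hVdef
  have hV0 : 0 < V := ENNReal.toReal_pos hΩpos.ne' hΩfin.ne
  -- integrability
  have hKmeas : Measurable fun y : EuclideanSpace ℝ (Fin N) => ‖x - y‖ ^ (-p) := by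
    fun_prop
  have hKnonneg : ∀ y, (0:ℝ) ≤ ‖x - y‖ ^ (-p) := fun y => Real.rpow_nonneg (norm_nonneg _) _
  have hconstM : IntegrableOn (fun _ : EuclideanSpace ℝ (Fin N) => M) Ω volume :=
    integrableOn_const hΩfin.ne
  have hconstm : IntegrableOn (fun _ : EuclideanSpace ℝ (Fin N) => m) Ω volume :=
    integrableOn_const hΩfin.ne
  have hKint : IntegrableOn (fun y => ‖x - y‖ ^ (-p)) Ω volume := by
    refine hconstM.mono' hKmeas.aestronglyMeasurable ?_
    filter_upwards [ae_restrict_mem hΩmeas] with y hy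
    rw [Real.norm_eq_abs, abs_of_nonneg (hKnonneg y)]
    exact (hker y hy).2
  have huKint : IntegrableOn (fun y => u y * ‖x - y‖ ^ (-p)) Ω volume := by
    refine (hu.const_mul M).mono' (hu.aestronglyMeasurable.mul hKmeas.aestronglyMeasurable) ?_
    filter_upwards [ae_restrict_mem hΩmeas] with y hy
    rw [Real.norm_eq_abs, abs_of_nonneg (mul_nonneg (hu0 y) (hKnonneg y))]
    calc u y * ‖x - y‖ ^ (-p) ≤ u y * M :=
          mul_le_mul_of_nonneg_left (hker y hy).2 (hu0 y)
      _ = M * u y := mul_comm _ _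
  set I : ℝ := ∫ y in Ω, ‖x - y‖ ^ (-p) with hIdef
  set J : ℝ := ∫ y in Ω, u y * ‖x - y‖ ^ (-p) with hJdef
  set S : ℝ := ∫ y in Ω, u y with hSdef
  have hS0 : 0 ≤ S := setIntegral_nonneg hΩmeas fun y _ => hu0 y
  have hIlb : m * V ≤ I := by
    have := setIntegral_mono_on hconstm hKint hΩmeas
      (fun y hy => (hker y hy).1)
    rwa [setIntegral_const, smul_eq_mul, mul_comm] at this
  have hIub : I ≤ M * V := by
    have := setIntegral_mono_on hKint hconstM hΩmeas
      (fun y hy => (hker y hy).2)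
    rwa [setIntegral_const, smul_eq_mul, mul_comm] at this
  have hJlb : m * S ≤ J := by
    have h : ∀ y ∈ Ω, m * u y ≤ u y * ‖x - y‖ ^ (-p) := fun y hy => by
      rw [mul_comm]; exact mul_le_mul_of_nonneg_left (hker y hy).1 (hu0 y)
    have := setIntegral_mono_on (hu.const_mul m) huKint hΩmeas h
    rwa [integral_const_mul] at this
  have hJub : J ≤ M * S := by
    have h : ∀ y ∈ Ω, u y * ‖x - y‖ ^ (-p) ≤ M * u y := fun y hy => by
      rw [mul_comm M]; exact mul_le_mul_of_nonneg_left (hker y hy).2 (hu0 y)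
    have := setIntegral_mono_on huKint (hu.const_mul M) hΩmeas h
    rwa [integral_const_mul] at this
  have hI0 : 0 < I := lt_of_lt_of_le (by positivity) hIlb
  have hJ0 : 0 ≤ J := le_trans (by positivity) hJlb
  have hux : u x = J / I := hext x hx
  set A : ℝ := V⁻¹ * S with hAdef
  have hA0 : 0 ≤ A := mul_nonneg (by positivity) hS0
  -- upper and lower bounds on u x
  have hupper : u x ≤ (M / m) * A := by
    rw [hux]
    calc J / I ≤ (M * S) / (m * V) :=
          div_le_div₀ (by positivity) hJub (by positivity) hIlb
      _ = (M / m) * A := by rw [hAdef]; field_simp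
  have hlower : (m / M) * A ≤ u x := by
    rw [hux]
    calc (m / M) * A = (m * S) / (M * V) := by rw [hAdef]; field_simp
      _ ≤ J / I := div_le_div₀ hJ0 hJlb hI0 hIub
  have hmM : m ≤ M :=
    Real.rpow_le_rpow_of_nonpos (by linarith) (by linarith) (by linarith)
  -- |u x - A| ≤ (M/m - 1) * A
  have habs : |u x - A| ≤ (M / m - 1) * A := by
    rw [abs_le]
    constructor
    · have key : (1 - m / M) ≤ (M / m - 1) := by
        have h1 : (0:ℝ) ≤ (M - m)^2 / (m * M) := by positivity
        have h2 : (M / m - 1) - (1 - m / M) = (M - m)^2 / (m * M) := by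
          field_simp
        linarith
      have : (1 - m / M) * A ≤ (M / m - 1) * A := mul_le_mul_of_nonneg_right key hA0
      nlinarith
    · nlinarith
  -- ratio bound
  set r : ℝ := (t + R₀) / (t - R₀) with hrdef
  have hr1 : 1 ≤ r := (one_le_div htmR).mpr (by linarith)
  have hr3 : r ≤ 3 := (div_le_iff₀ htmR).mpr (by linarith)
  have hMm : M / m = r ^ p := by
    rw [hrdef, Real.div_rpow (by linarith) (by linarith), hMdef, hmdef,
      Real.rpow_neg (by linarith : (0:ℝ) ≤ t - R₀),
      Real.rpow_neg (by linarith : (0:ℝ) ≤ t + R₀), inv_div_inv]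
  have hratio : M / m - 1 ≤ (((N:ℝ)+2) * 3^(N+2) * 4 * R₀) / t := by
    have hpN : p ≤ (N:ℝ) + 2 := by rw [hp]; linarith
    have h1 : r ^ p ≤ r ^ ((N:ℝ) + 2) := Real.rpow_le_rpow_of_exponent_le hr1 hpN
    have hcast : ((N:ℝ) + 2) = ((N + 2 : ℕ) : ℝ) := by push_cast; ring
    have h2 : r ^ ((N:ℝ) + 2) = r ^ (N + 2 : ℕ) := by
      rw [hcast, Real.rpow_natCast]
    have h3 : r ^ (N + 2 : ℕ) - 1 ≤ (N + 2 : ℕ) * 3 ^ (N + 2) * (r - 1) :=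
      pow_sub_one_le_aux (N + 2) r hr1 hr3
    have hrm1 : r - 1 ≤ 4 * R₀ / t := by
      have : r - 1 = 2 * R₀ / (t - R₀) := by
        rw [hrdef]; field_simp; ring
      rw [this, div_le_div_iff₀ htmR ht0]
      nlinarith
    have hcoef : (0:ℝ) ≤ ((N:ℝ) + 2) * 3 ^ (N + 2) := by positivity
    calc M / m - 1 = r ^ p - 1 := by rw [hMm]
      _ ≤ r ^ (N + 2 : ℕ) - 1 := by rw [← h2]; linarith
      _ ≤ ((N:ℝ) + 2) * 3 ^ (N + 2) * (r - 1) := by push_cast at h3 ⊢; linarith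
      _ ≤ ((N:ℝ) + 2) * 3 ^ (N + 2) * (4 * R₀ / t) :=
          mul_le_mul_of_nonneg_left hrm1 hcoef
      _ = (((N:ℝ)+2) * 3^(N+2) * 4 * R₀) / t := by ring
  calc |u x - A| ≤ (M / m - 1) * A := habs
    _ ≤ ((((N:ℝ)+2) * 3^(N+2) * 4 * R₀) / t) * A :=
        mul_le_mul_of_nonneg_right hratio hA0
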